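/- Let Σ be a K×K symmetric positive-definite matrix with non-positive off-diagonal entries, α ∈ ℝ^K strictly positive with Σα ≥ 0 coordinatewise. Then for every q ∈ ℝ_{≥0}^K, the vector (Σ⁻¹ + diag(q))⁻¹α has non-negative coordinates. -/

import Mathlib

open Matrix

lemma zmat_nonneg {K : ℕ} (A : Matrix (Fin K) (Fin K) ℝ)
    (hA : A.PosDef) (hOff : ∀ i j, i ≠ j → A i j ≤ 0)
    (x : Fin K → ℝ) (hx : ∀ i, 0 ≤ (A *ᵥ x) i) : ∀ i, 0 ≤ x i := by
  set xm : Fin K → ℝ := fun i => max (-x i) 0 with hxmdef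
  set xp : Fin K → ℝ := fun i => max (x i) 0 with hxpdef
  have hxm0 : ∀ i, 0 ≤ xm i := fun i => le_max_right _ _
  have hxp0 : ∀ i, 0 ≤ xp i := fun i => le_max_right _ _
  have hdisj : ∀ i, xm i * xp i = 0 := by
    intro i
    rcases le_total (x i) 0 with h | h
    · simp [hxpdef, max_eq_right h]
    · simp [hxmdef, max_eq_right (neg_nonpos_of_nonneg h)]
  have hsplit : ∀ i, xp i = x i + xm i := by
    intro i
    rcases le_total (x i) 0 with h | h
    · simp [hxpdef, hxmdef, max_eq_right h, max_eq_left (neg_nonneg_of_nonpos h)]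
    · simp [hxpdef, hxmdef, max_eq_left h, max_eq_right (neg_nonpos_of_nonneg h)]
  have h1 : xm ⬝ᵥ (A *ᵥ xm) = xm ⬝ᵥ (A *ᵥ xp) - xm ⬝ᵥ (A *ᵥ x) := by
    have : xp = x + xm := funext fun i => hsplit i
    rw [this, Matrix.mulVec_add, dotProduct_add]
    ring
  have h2 : 0 ≤ xm ⬝ᵥ (A *ᵥ x) :=
    Finset.sum_nonneg fun i _ => mul_nonneg (hxm0 i) (hx i)
  have h3 : xm ⬝ᵥ (A *ᵥ xp) ≤ 0 := by
    apply Finset.sum_nonpos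
    intro i _
    rw [Matrix.mulVec, dotProduct, Finset.mul_sum]
    apply Finset.sum_nonpos
    intro j _
    rcases eq_or_ne i j with rfl | hij
    · rw [show xm i * (A i i * xp i) = A i i * (xm i * xp i) from by ring, hdisj i, mul_zero]
    · exact mul_nonpos_of_nonneg_of_nonpos (hxm0 i)
        (mul_nonpos_of_nonpos_of_nonneg (hOff i j hij) (hxp0 j))
  have key : xm ⬝ᵥ (A *ᵥ xm) ≤ 0 := by rw [h1]; linarith
  have hzm : xm = 0 := by
    by_contra h
    have := hA.dotProduct_mulVec_pos h
    rw [star_trivial] at this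
    linarith
  intro i
  have hi : xm i = 0 := congrFun hzm i
  have h : -x i ≤ xm i := le_max_left _ _
  rw [hi] at h
  linarith

theorem stmt_9 {K : ℕ} (S : Matrix (Fin K) (Fin K) ℝ) (hS : S.PosDef)
    (hOff : ∀ i j, i ≠ j → S i j ≤ 0)
    (α : Fin K → ℝ) (hα : ∀ i, 0 < α i)
    (hSα : ∀ i, 0 ≤ (S *ᵥ α) i)
    (q : Fin K → ℝ) (hq : ∀ i, 0 ≤ q i) :
    ∀ i, 0 ≤ ((S⁻¹ + diagonal q)⁻¹ *ᵥ α) i := by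
  -- Case of strictly positive diagonal perturbation
  have main : ∀ p : Fin K → ℝ, (∀ i, 0 < p i) →
      ∀ i, 0 ≤ ((S⁻¹ + diagonal p)⁻¹ *ᵥ α) i := by
    intro p hp
    set E : Matrix (Fin K) (Fin K) ℝ := diagonal fun i => (p i)⁻¹ with hE
    have hSd : IsUnit S.det := isUnit_iff_ne_zero.2 hS.det_pos.ne'
    have hM2 : (S + E).PosDef :=
      hS.add_posSemidef (posSemidef_diagonal_iff.2 fun i => inv_nonneg.2 (hp i).le)
    have hM2d : IsUnit (S + E).det := isUnit_iff_ne_zero.2 hM2.det_pos.ne'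
    set w : Fin K → ℝ := (S + E)⁻¹ *ᵥ (S *ᵥ α) with hw
    have hMw : (S + E) *ᵥ w = S *ᵥ α := by
      rw [hw, Matrix.mulVec_mulVec, Matrix.mul_nonsing_inv _ hM2d, Matrix.one_mulVec]
    have hw0 : ∀ i, 0 ≤ w i := by
      apply zmat_nonneg _ hM2
      · intro i j hij
        have : E i j = 0 := diagonal_apply_ne _ hij
        simpa [Matrix.add_apply, this] using hOff i j hij
      · rw [hMw]; exact hSα
    have hC : (S⁻¹ + diagonal p).PosDef :=
      hS.inv.add_posSemidef (posSemidef_diagonal_iff.2 fun i => (hp i).le)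
    have hCd : IsUnit (S⁻¹ + diagonal p).det := isUnit_iff_ne_zero.2 hC.det_pos.ne'
    have hEwv : E *ᵥ w = S *ᵥ α - S *ᵥ w := by
      have h := hMw
      rw [Matrix.add_mulVec] at h
      linear_combination (norm := module) h
    have hEw : (S⁻¹ + diagonal p) *ᵥ (E *ᵥ w) = α := by
      rw [Matrix.add_mulVec]
      have h1 : S⁻¹ *ᵥ (E *ᵥ w) = α - w := by
        rw [hEwv, ← Matrix.mulVec_sub, Matrix.mulVec_mulVec,
          Matrix.nonsing_inv_mul _ hSd, Matrix.one_mulVec]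
      have h2 : diagonal p *ᵥ (E *ᵥ w) = w := by
        rw [Matrix.mulVec_mulVec, hE, diagonal_mul_diagonal]
        have : (fun i => p i * (p i)⁻¹) = fun _ => (1:ℝ) := by
          funext i; exact mul_inv_cancel₀ (hp i).ne'
        rw [this, diagonal_one, Matrix.one_mulVec]
      rw [h1, h2]
      abel
    have hx : (S⁻¹ + diagonal p)⁻¹ *ᵥ α = E *ᵥ w := by
      rw [← hEw, Matrix.mulVec_mulVec, Matrix.nonsing_inv_mul _ hCd, Matrix.one_mulVec]
    intro i
    rw [hx]
    have : (E *ᵥ w) i = (p i)⁻¹ * w i := Matrix.mulVec_diagonal _ _ _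
    rw [this]
    exact mul_nonneg (inv_nonneg.2 (hp i).le) (hw0 i)
  -- Pass to the limit q + ε → q
  intro i
  set g : ℝ → Matrix (Fin K) (Fin K) ℝ := fun ε => S⁻¹ + diagonal fun j => q j + ε with hg
  have hg0 : g 0 = S⁻¹ + diagonal q := by
    simp [hg]
  have hgc : Continuous g := by
    apply continuous_matrix
    intro a b
    simp only [hg, Matrix.add_apply, Matrix.diagonal_apply]
    rcases eq_or_ne a b with rfl | hab
    · simp only [↓reduceIte]
      exact continuous_const.add (continuous_const.add continuous_id)
    · simp only [if_neg hab, add_zero]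
      exact continuous_const
  have hC0 : (S⁻¹ + diagonal q).PosDef :=
    hS.inv.add_posSemidef (posSemidef_diagonal_iff.2 hq)
  have hdet : (S⁻¹ + diagonal q).det ≠ 0 := hC0.det_pos.ne'
  have hinv : ContinuousAt Inv.inv (g 0) := by
    rw [hg0]
    apply continuousAt_matrix_inv
    rw [Ring.inverse_eq_inv']
    exact continuousAt_inv₀ hdet
  have h1 : ContinuousAt (fun ε => (g ε)⁻¹) 0 := hinv.comp hgc.continuousAt
  have hF : Continuous fun M : Matrix (Fin K) (Fin K) ℝ => (M *ᵥ α) i :=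
    (continuous_apply i).comp (continuous_id.matrix_mulVec continuous_const)
  have h2 : ContinuousAt (fun ε => ((g ε)⁻¹ *ᵥ α) i) 0 := hF.continuousAt.comp h1
  have htend : Filter.Tendsto (fun ε => ((g ε)⁻¹ *ᵥ α) i) (nhdsWithin 0 (Set.Ioi 0))
      (nhds (((S⁻¹ + diagonal q)⁻¹ *ᵥ α) i)) := by
    have h3 := h2.tendsto
    rw [hg0] at h3
    exact h3.mono_left nhdsWithin_le_nhds
  refine ge_of_tendsto htend ?_
  filter_upwards [self_mem_nhdsWithin] with ε (hε : ε ∈ Set.Ioi 0)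
  exact main (fun j => q j + ε) (fun j => add_pos_of_nonneg_of_pos (hq j) hε) i
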